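/- Let G be an undirected graph on n nodes with self-loops at every node and A its equal-neighbor update matrix. Then for every vector x ∈ R^n, V(Ax) = V(x) − Σ_{i<j} (x_i − x_j)^2 · Σ_{k ∈ N_i ∩ N_j} 1/d_k, where V(y) = Σ_i d_i y_i^2 = y^T D y. -/

import Mathlib

theorem lyapunov_exact_decrease
    (n : ℕ) (N : Fin n → Finset (Fin n))
    (hsym : ∀ i j, j ∈ N i ↔ i ∈ N j)
    (hself : ∀ i, i ∈ N i)
    (A : Matrix (Fin n) (Fin n) ℝ)
    (hA : ∀ i j, A i j = if j ∈ N i then ((N i).card : ℝ)⁻¹ else 0)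
    (x : Fin n → ℝ) :
    ∑ i, ((N i).card : ℝ) * (A.mulVec x i) ^ 2 =
      ∑ i, ((N i).card : ℝ) * (x i) ^ 2 -
        ∑ p ∈ Finset.univ.filter (fun p : Fin n × Fin n => p.1 < p.2),
          (x p.1 - x p.2) ^ 2 * ∑ k ∈ N p.1 ∩ N p.2, ((N k).card : ℝ)⁻¹ := by
  classical
  set d : Fin n → ℝ := fun i => ((N i).card : ℝ) with hdd
  have hd0 : ∀ i, d i ≠ 0 := by
    intro i
    have h : (N i).card ≠ 0 := Finset.card_ne_zero_of_mem (hself i)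
    simpa [hdd] using h
  set S : Fin n → ℝ := fun i => ∑ j ∈ N i, x j with hS
  have hmul : ∀ i, A.mulVec x i = (d i)⁻¹ * S i := by
    intro i
    simp only [Matrix.mulVec, dotProduct, hA, ite_mul, zero_mul]
    rw [Finset.sum_ite_mem, Finset.univ_inter, hS, Finset.mul_sum]
  set T : Fin n → ℝ := fun i => ∑ a ∈ N i, ∑ b ∈ N i, (x a - x b) ^ 2 with hT
  have expand : ∀ i, T i = 2 * (d i * ∑ j ∈ N i, x j ^ 2) - 2 * S i ^ 2 := by
    intro i
    have h1 : ∀ a b : Fin n, (x a - x b) ^ 2 = x a ^ 2 + x b ^ 2 - 2 * (x a * x b) := by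
      intro a b; ring
    simp only [hT, h1, Finset.sum_add_distrib, Finset.sum_sub_distrib,
      Finset.sum_const, nsmul_eq_mul, ← Finset.mul_sum, ← Finset.sum_mul]
    rw [hS]
    ring_nf
    simp only [hdd]; ring
  have step1 : ∀ i, d i * ((d i)⁻¹ * S i) ^ 2
      = (∑ j ∈ N i, x j ^ 2) - (d i)⁻¹ * (T i / 2) := by
    intro i
    have h2 : S i ^ 2 = d i * (∑ j ∈ N i, x j ^ 2) - T i / 2 := by linarith [expand i]
    calc d i * ((d i)⁻¹ * S i) ^ 2 = (d i)⁻¹ * S i ^ 2 := by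
          rw [mul_pow, ← mul_assoc, sq, ← mul_assoc, mul_inv_cancel₀ (hd0 i), one_mul]
      _ = (d i)⁻¹ * (d i * (∑ j ∈ N i, x j ^ 2) - T i / 2) := by rw [h2]
      _ = (∑ j ∈ N i, x j ^ 2) - (d i)⁻¹ * (T i / 2) := by
          rw [mul_sub, ← mul_assoc, inv_mul_cancel₀ (hd0 i), one_mul]
  rw [Finset.sum_congr rfl (fun i _ => by rw [hmul i, step1 i])]
  rw [Finset.sum_sub_distrib]
  have swap1 : ∑ i, ∑ j ∈ N i, x j ^ 2 = ∑ j, d j * x j ^ 2 := by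
    have h1 : ∀ i, ∑ j ∈ N i, x j ^ 2 = ∑ j, if j ∈ N i then x j ^ 2 else 0 := by
      intro i; rw [Finset.sum_ite_mem, Finset.univ_inter]
    simp only [h1]
    rw [Finset.sum_comm]
    refine Finset.sum_congr rfl fun j _ => ?_
    simp only [hsym]
    rw [Finset.sum_ite_mem, Finset.univ_inter, Finset.sum_const, nsmul_eq_mul, hdd]
  rw [swap1]
  congr 1
  set c : Fin n → Fin n → ℝ :=
    fun a b => (x a - x b) ^ 2 * ∑ k ∈ N a ∩ N b, (d k)⁻¹ with hc
  have hQ : ∑ i, (d i)⁻¹ * (T i / 2) = (∑ a, ∑ b, c a b) / 2 := by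
    have h1 : ∀ i, (d i)⁻¹ * (T i / 2)
        = ∑ a, ∑ b, (if a ∈ N i ∧ b ∈ N i then (d i)⁻¹ * ((x a - x b) ^ 2 / 2) else 0) := by
      intro i
      have hinner : ∀ a, (∑ b, (if a ∈ N i ∧ b ∈ N i then (d i)⁻¹ * ((x a - x b) ^ 2 / 2) else 0))
          = if a ∈ N i then ∑ b ∈ N i, (d i)⁻¹ * ((x a - x b) ^ 2 / 2) else 0 := by
        intro a
        by_cases h : a ∈ N i
        · simp [h, Finset.sum_ite_mem]
        · simp [h]
      simp only [hinner]
      rw [Finset.sum_ite_mem, Finset.univ_inter]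
      show (d i)⁻¹ * ((∑ a ∈ N i, ∑ b ∈ N i, (x a - x b) ^ 2) / 2)
          = ∑ a ∈ N i, ∑ b ∈ N i, (d i)⁻¹ * ((x a - x b) ^ 2 / 2)
      rw [Finset.sum_div, Finset.mul_sum]
      refine Finset.sum_congr rfl fun a _ => ?_
      rw [Finset.sum_div, Finset.mul_sum]
    simp only [h1]
    rw [Finset.sum_comm]
    rw [Finset.sum_congr rfl (fun a (_ : a ∈ Finset.univ) => Finset.sum_comm)]
    rw [Finset.sum_div]
    refine Finset.sum_congr rfl fun a _ => ?_
    rw [Finset.sum_div]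
    refine Finset.sum_congr rfl fun b _ => ?_
    have hcond : ∀ i : Fin n, (a ∈ N i ∧ b ∈ N i) ↔ i ∈ N a ∩ N b := by
      intro i; rw [Finset.mem_inter, hsym a i, hsym b i]
    simp only [hcond]
    rw [Finset.sum_ite_mem, Finset.univ_inter]
    show (∑ i ∈ N a ∩ N b, (d i)⁻¹ * ((x a - x b) ^ 2 / 2))
        = (x a - x b) ^ 2 * (∑ k ∈ N a ∩ N b, (d k)⁻¹) / 2
    rw [Finset.mul_sum, Finset.sum_div]
    exact Finset.sum_congr rfl fun k _ => by ring
  rw [hQ]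
  have hdiag : ∀ a, c a a = 0 := by intro a; simp [hc]
  have hsymc : ∀ a b, c a b = c b a := by
    intro a b; simp only [hc]
    rw [Finset.inter_comm]; ring_nf
  have hfull : ∑ a, ∑ b, c a b
      = 2 * ∑ p ∈ Finset.univ.filter (fun p : Fin n × Fin n => p.1 < p.2), c p.1 p.2 := by
    have h0 : ∑ a, ∑ b, c a b = ∑ p : Fin n × Fin n, c p.1 p.2 := by
      rw [← Finset.univ_product_univ, Finset.sum_product]
    rw [h0, ← Finset.sum_filter_add_sum_filter_not Finset.univ
      (fun p : Fin n × Fin n => p.1 < p.2)]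
    have h2 : ∑ p ∈ Finset.univ.filter (fun p : Fin n × Fin n => ¬ p.1 < p.2), c p.1 p.2
        = ∑ p ∈ Finset.univ.filter (fun p : Fin n × Fin n => p.1 < p.2), c p.1 p.2 := by
      rw [← Finset.sum_filter_add_sum_filter_not
        (Finset.univ.filter (fun p : Fin n × Fin n => ¬ p.1 < p.2))
        (fun p : Fin n × Fin n => p.2 < p.1)]
      have h3 : (Finset.univ.filter (fun p : Fin n × Fin n => ¬ p.1 < p.2)).filter
          (fun p : Fin n × Fin n => p.2 < p.1)
          = Finset.univ.filter (fun p : Fin n × Fin n => p.2 < p.1) := by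
        rw [Finset.filter_filter]
        refine Finset.filter_congr fun p _ => ?_
        constructor
        · exact fun h => h.2
        · exact fun h => ⟨asymm h, h⟩
      have h4 : ∑ p ∈ (Finset.univ.filter (fun p : Fin n × Fin n => ¬ p.1 < p.2)).filter
          (fun p : Fin n × Fin n => ¬ p.2 < p.1), c p.1 p.2 = 0 := by
        refine Finset.sum_eq_zero fun p hp => ?_
        simp only [Finset.mem_filter] at hp
        have : p.1 = p.2 := le_antisymm (not_lt.mp hp.2) (not_lt.mp hp.1.2)
        rw [this]; exact hdiag p.2
      rw [h3, h4, add_zero]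
      refine Finset.sum_nbij' (fun p => (p.2, p.1)) (fun p => (p.2, p.1)) ?_ ?_ ?_ ?_ ?_
      · intro p hp; simp only [Finset.mem_filter] at hp ⊢; exact ⟨Finset.mem_univ _, hp.2⟩
      · intro p hp; simp only [Finset.mem_filter] at hp ⊢; exact ⟨Finset.mem_univ _, hp.2⟩
      · intro p _; rfl
      · intro p _; rfl
      · intro p _; exact hsymc p.1 p.2
    rw [h2]; ring
  rw [hfull]
  ring
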